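/- For every atomless Borel probability measure F on [0,∞) with finite first moment, posting the (√2/2)-quantile of F as the price yields welfare at least (2+√2)/4 of the optimal welfare on the symmetric instance: W((F,F), F^{-1}(√2/2)) ≥ ((2+√2)/4) · OPT((F,F)). -/

import Mathlib

open MeasureTheory

/-- Expected welfare of the fixed price `p` on the bilateral-trade instance `(μ, ν)`. -/
noncomputable def welfare (μ ν : Measure ℝ) (p : ℝ) : ℝ :=
  ∫ z : ℝ × ℝ, (z.1 + if z.1 ≤ p ∧ p ≤ z.2 then z.2 - z.1 else 0) ∂(μ.prod ν)

/-- Optimal welfare `OPT(I) = E[max(S,B)]`. -/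
noncomputable def optWelfare (μ ν : Measure ℝ) : ℝ :=
  ∫ z : ℝ × ℝ, max z.1 z.2 ∂(μ.prod ν)

/-- The quantile function of a measure `F` on `ℝ`:
`F⁻¹(x) = inf { y | F((−∞,y]) ≥ x }`. -/
noncomputable def quantileFn (F : Measure ℝ) (x : ℝ) : ℝ :=
  sInf { y : ℝ | x ≤ (F (Set.Iic y)).toReal }

open Set Filter ProbabilityTheory

lemma aux_Iio_eq_Iic {F : Measure ℝ} (hatomless : ∀ x : ℝ, F {x} = 0) (t : ℝ) :
    F (Set.Iio t) = F (Set.Iic t) := by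
  refine le_antisymm (measure_mono Iio_subset_Iic_self) ?_
  rw [← Set.Iio_union_right]
  refine (measure_union_le _ _).trans ?_
  rw [hatomless t, add_zero]

lemma aux_Iic_zero {F : Measure ℝ} (hF : F (Set.Iio 0) = 0)
    (hatomless : ∀ x : ℝ, F {x} = 0) {t : ℝ} (ht : t ≤ 0) : F (Set.Iic t) = 0 := by
  have h0 : F (Set.Iic 0) = 0 := by
    rw [← aux_Iio_eq_Iic hatomless, hF]
  exact le_antisymm ((measure_mono (Iic_subset_Iic.2 ht)).trans h0.le) zero_le

lemma aux_quantile (F : Measure ℝ) [IsProbabilityMeasure F] (hF : F (Set.Iio 0) = 0)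
    (hatomless : ∀ x : ℝ, F {x} = 0) {q : ℝ} (hq0 : 0 < q) (hq1 : q < 1) :
    0 ≤ quantileFn F q ∧ (F (Set.Iic (quantileFn F q))).toReal = q := by
  classical
  have hcdf : ∀ y, (F (Set.Iic y)).toReal = cdf F y := fun y => (cdf_eq_real F y).symm
  set S : Set ℝ := {y : ℝ | q ≤ (F (Set.Iic y)).toReal} with hS
  have hp : quantileFn F q = sInf S := rfl
  have hne : S.Nonempty := by
    obtain ⟨y, hy⟩ := ((tendsto_cdf_atTop F).eventually (eventually_ge_nhds hq1)).exists
    exact ⟨y, by simp only [hS, Set.mem_setOf_eq, hcdf y]; exact hy⟩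
  have hS0 : ∀ y ∈ S, (0:ℝ) ≤ y := by
    intro y hy
    by_contra hneg
    push_neg at hneg
    have h0 : F (Set.Iic y) = 0 :=
      measure_mono_null (fun x hx => lt_of_le_of_lt hx hneg) hF
    have hy' : q ≤ (F (Set.Iic y)).toReal := hy
    rw [h0] at hy'
    simp at hy'
    linarith
  have hbdd : BddBelow S := ⟨0, hS0⟩
  set p := sInf S with hpdef
  have p0 : 0 ≤ p := le_csInf hne hS0
  have hupper : q ≤ cdf F p := by
    have key : ∀ y ∈ Set.Ioi p, q ≤ cdf F y := by
      intro y hy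
      obtain ⟨s, hsS, hsy⟩ := exists_lt_of_csInf_lt hne hy
      calc q ≤ (F (Set.Iic s)).toReal := hsS
        _ = cdf F s := hcdf s
        _ ≤ cdf F y := monotone_cdf F hsy.le
    have h1 : Filter.Tendsto (cdf F) (nhdsWithin p (Set.Ioi p)) (nhds (cdf F p)) :=
      ((cdf F).right_continuous p).mono_left (nhdsWithin_mono _ Set.Ioi_subset_Ici_self)
    exact ge_of_tendsto h1 (eventually_nhdsWithin_of_forall key)
  have hlower : cdf F p ≤ q := by
    have hun : Set.Iio p = ⋃ n : ℕ, Set.Iic (p - 1/(n+1)) := by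
      ext x
      simp only [Set.mem_Iio, Set.mem_iUnion, Set.mem_Iic]
      constructor
      · intro hx
        obtain ⟨n, hn⟩ := exists_nat_one_div_lt (sub_pos.2 hx)
        exact ⟨n, by linarith⟩
      · rintro ⟨n, hn⟩
        have hpos : (0:ℝ) < 1/(n+1) := by positivity
        linarith
    have hmono : Monotone (fun n : ℕ => Set.Iic (p - 1/(n+1 : ℝ))) := by
      intro n m hnm
      apply Set.Iic_subset_Iic.2
      have h1 : ((n:ℝ)+1) ≤ ((m:ℝ)+1) := by
        have := (Nat.cast_le (α := ℝ)).2 hnm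
        linarith
      have h2 : (1:ℝ)/(m+1) ≤ 1/(n+1) :=
        one_div_le_one_div_of_le (by positivity) h1
      linarith
    have hle : F (Set.Iio p) ≤ ENNReal.ofReal q := by
      rw [hun, hmono.measure_iUnion]
      refine iSup_le fun n => ?_
      have hlt : p - 1/(n+1 : ℝ) < p := by
        have hpos : (0:ℝ) < 1/(n+1) := by positivity
        linarith
      have hnot : (p - 1/(n+1:ℝ)) ∉ S := fun h => absurd (csInf_le hbdd h) (not_le.2 hlt)
      have hlt' : cdf F (p - 1/(n+1:ℝ)) ≤ q := by
        by_contra hcon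
        push_neg at hcon
        refine hnot ?_
        simp only [hS, Set.mem_setOf_eq, hcdf]
        exact hcon.le
      rw [← ofReal_cdf F]
      exact ENNReal.ofReal_le_ofReal hlt'
    have heq : cdf F p = (F (Set.Iio p)).toReal := by
      rw [← hcdf p, aux_Iio_eq_Iic hatomless]
    rw [heq]
    calc (F (Set.Iio p)).toReal ≤ (ENNReal.ofReal q).toReal :=
          ENNReal.toReal_mono ENNReal.ofReal_ne_top hle
      _ = q := ENNReal.toReal_ofReal hq0.le
  constructor
  · rw [hp]; exact p0
  · rw [hp, hcdf]; exact le_antisymm hlower hupper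

set_option maxHeartbeats 1600000

/-- On every symmetric instance (atomless `F` on `[0,∞)` with finite first moment),
posting the `√2/2`-quantile of `F` as the price obtains at least `(2+√2)/4` of the
optimal welfare. -/
theorem stmt_13 (F : Measure ℝ) [IsProbabilityMeasure F] (hF : F (Set.Iio 0) = 0)
    (hatomless : ∀ x : ℝ, F {x} = 0) (hFi : Integrable id F) :
    ((2 + Real.sqrt 2) / 4) * optWelfare F F ≤
      welfare F F (quantileFn F (Real.sqrt 2 / 2)) := by
  classical
  set s2 : ℝ := Real.sqrt 2 with hs2def
  have hs2 : s2 * s2 = 2 := Real.mul_self_sqrt (by norm_num)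
  have hs2nn : 0 ≤ s2 := Real.sqrt_nonneg 2
  have hs2lt : s2 < 2 := by nlinarith
  have hs2gt : 1 < s2 := by nlinarith
  set q : ℝ := s2 / 2 with hqdef
  have hq0 : 0 < q := by rw [hqdef]; linarith
  have hq1 : q < 1 := by rw [hqdef]; linarith
  set c : ℝ := (2 + s2) / 4 with hcdef
  obtain ⟨p0, hPq⟩ := aux_quantile F hF hatomless hq0 hq1
  set p : ℝ := quantileFn F q with hpdef
  -- notation
  set Φ : ℝ → ℝ := fun t => (F (Set.Iic t)).toReal with hΦdef
  set g : ℝ → ℝ := fun t => (F (Set.Ioi t)).toReal with hgdef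
  have hΦ_mono : Monotone Φ := fun a b hab =>
    ENNReal.toReal_mono (measure_ne_top _ _) (measure_mono (Iic_subset_Iic.2 hab))
  have hΦ_meas : Measurable Φ := hΦ_mono.measurable
  have hΦ0 : ∀ t, 0 ≤ Φ t := fun t => ENNReal.toReal_nonneg
  have hΦ1 : ∀ t, Φ t ≤ 1 := fun t => by
    have h := ENNReal.toReal_mono ENNReal.one_ne_top (prob_le_one (μ := F) (s := Set.Iic t))
    simpa using h
  have hg_eq : ∀ t, g t = 1 - Φ t := by
    intro t
    have h := measure_compl (measurableSet_Iic (a := t)) (measure_ne_top F _)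
    rw [Set.compl_Iic, measure_univ] at h
    rw [hgdef]
    simp only
    rw [h, ENNReal.toReal_sub_of_le prob_le_one ENNReal.one_ne_top, ENNReal.toReal_one]
  have hg_anti : Antitone g := fun a b hab => by
    rw [hg_eq a, hg_eq b]
    linarith [hΦ_mono hab]
  have hg_meas : Measurable g := hg_anti.measurable
  have hg_nn : ∀ t, 0 ≤ g t := fun t => ENNReal.toReal_nonneg
  have hΦzero : ∀ t : ℝ, t ≤ 0 → Φ t = 0 := by
    intro t ht
    rw [hΦdef]
    simp only
    rw [aux_Iic_zero hF hatomless ht]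
    simp
  -- E[S]
  have hid_nn : (0 : ℝ → ℝ) ≤ᵐ[F] id := by
    have h1 : ∀ᵐ x ∂F, (0:ℝ) ≤ x := by
      rw [ae_iff]
      convert hF using 2
      ext x
      simp [not_le]
    filter_upwards [h1] with x hx
    exact hx
  have hES : ∫ x, id x ∂F = ∫ t in Set.Ioi 0, g t := by
    rw [hFi.integral_eq_integral_meas_lt hid_nn]
    rfl
  -- a = E[(p - S)⁺]
  set fa : ℝ → ℝ := fun x => max (p - x) 0 with hfadef
  have hfa_meas : Measurable fa := (measurable_const.sub measurable_id).max measurable_const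
  have habs_int : Integrable (fun x : ℝ => |p| + |x|) F :=
    ((integrable_const |p|).add hFi.abs).congr (Filter.Eventually.of_forall fun x => rfl)
  have hfa_int : Integrable fa F := by
    refine habs_int.mono' hfa_meas.aestronglyMeasurable
      (Filter.Eventually.of_forall fun x => ?_)
    rw [Real.norm_of_nonneg (le_max_right _ _)]
    refine max_le ?_ (by positivity)
    have h1 := le_abs_self p
    have h2 := neg_abs_le x
    linarith
  have ha : ∫ x, fa x ∂F = ∫ t in Set.Ioi 0, (Set.Iio p).indicator Φ t := by
    rw [hfa_int.integral_eq_integral_meas_lt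
      (Filter.Eventually.of_forall fun x => le_max_right _ _)]
    have h1 : ∫ t in Set.Ioi 0, ((F {a | t < fa a}).toReal)
        = ∫ t in Set.Ioi 0, Φ (p - t) := by
      refine setIntegral_congr_fun measurableSet_Ioi fun t ht => ?_
      have hset : {a : ℝ | t < fa a} = Set.Iio (p - t) := by
        ext x
        simp only [hfadef, Set.mem_setOf_eq, Set.mem_Iio, lt_max_iff]
        constructor
        · rintro (h | h)
          · linarith
          · exact absurd h (not_lt.2 (le_of_lt ht))
        · intro h; left; linarith
      rw [hset, aux_Iio_eq_Iic hatomless]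
    simp only [measureReal_def]
    rw [h1]
    have h2 : ∫ t in Set.Ioi 0, Φ (p - t) = ∫ u in Set.Iio p, Φ u := by
      have hmp : MeasurePreserving (fun t : ℝ => p - t) volume volume :=
        Measure.measurePreserving_sub_left volume p
      have hemb : MeasurableEmbedding (fun t : ℝ => p - t) :=
        (MeasurableEquiv.subLeft p).measurableEmbedding
      have hpre : (fun t : ℝ => p - t) ⁻¹' Set.Iio p = Set.Ioi 0 := by
        ext t
        simp only [Set.mem_preimage, Set.mem_Iio, Set.mem_Ioi]
        constructor <;> intro h <;> linarith
      rw [← hpre]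
      exact hmp.setIntegral_preimage_emb hemb Φ (Set.Iio p)
    rw [h2, ← integral_indicator measurableSet_Iio]
    refine (setIntegral_eq_integral_of_forall_compl_eq_zero fun t ht => ?_).symm
    have ht' : t ≤ 0 := not_lt.1 (by simpa using ht)
    by_cases hmem : t ∈ Set.Iio p
    · rw [Set.indicator_of_mem hmem, hΦzero t ht']
    · rw [Set.indicator_of_notMem hmem]
  -- b = E[(B - p)⁺]
  set fb : ℝ → ℝ := fun x => max (x - p) 0 with hfbdef
  have hfb_meas : Measurable fb := (measurable_id.sub measurable_const).max measurable_const
  have hfb_int : Integrable fb F := by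
    refine habs_int.mono' hfb_meas.aestronglyMeasurable
      (Filter.Eventually.of_forall fun x => ?_)
    rw [Real.norm_of_nonneg (le_max_right _ _)]
    refine max_le ?_ (by positivity)
    have h1 := le_abs_self x
    have h2 := neg_abs_le p
    linarith
  have hb : ∫ x, fb x ∂F = ∫ t in Set.Ioi 0, (Set.Ioi p).indicator g t := by
    rw [hfb_int.integral_eq_integral_meas_lt
      (Filter.Eventually.of_forall fun x => le_max_right _ _)]
    have h1 : ∫ t in Set.Ioi 0, ((F {a | t < fb a}).toReal)
        = ∫ t in Set.Ioi 0, g (t + p) := by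
      refine setIntegral_congr_fun measurableSet_Ioi fun t ht => ?_
      have hset : {a : ℝ | t < fb a} = Set.Ioi (t + p) := by
        ext x
        simp only [hfbdef, Set.mem_setOf_eq, Set.mem_Ioi, lt_max_iff]
        constructor
        · rintro (h | h)
          · linarith
          · exact absurd h (not_lt.2 (le_of_lt ht))
        · intro h; left; linarith
      rw [hset]
    simp only [measureReal_def]
    rw [h1]
    have h2 : ∫ t in Set.Ioi 0, g (t + p) = ∫ u in Set.Ioi p, g u := by
      have hmp : MeasurePreserving (fun t : ℝ => t + p) volume volume :=
        measurePreserving_add_right volume p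
      have hemb : MeasurableEmbedding (fun t : ℝ => t + p) :=
        (MeasurableEquiv.addRight p).measurableEmbedding
      have hpre : (fun t : ℝ => t + p) ⁻¹' Set.Ioi p = Set.Ioi 0 := by
        ext t
        simp only [Set.mem_preimage, Set.mem_Ioi]
        constructor <;> intro h <;> linarith
      rw [← hpre]
      exact hmp.setIntegral_preimage_emb hemb g (Set.Ioi p)
    rw [h2, ← integral_indicator measurableSet_Ioi]
    refine (setIntegral_eq_integral_of_forall_compl_eq_zero fun t ht => ?_).symm
    have ht' : t ≤ 0 := not_lt.1 (by simpa using ht)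
    have hmem : t ∉ Set.Ioi p := by
      simp only [Set.mem_Ioi, not_lt]
      linarith
    rw [Set.indicator_of_notMem hmem]
  -- OPT
  have hmax_meas : Measurable (fun z : ℝ × ℝ => max z.1 z.2) :=
    measurable_fst.max measurable_snd
  have hmax_nn : (0 : ℝ × ℝ → ℝ) ≤ᵐ[F.prod F] fun z => max z.1 z.2 := by
    have hz : (F.prod F) {z : ℝ × ℝ | z.1 < 0} = 0 := by
      have hset : {z : ℝ × ℝ | z.1 < 0} = Set.Iio 0 ×ˢ Set.univ := by
        ext z; simp
      rw [hset, Measure.prod_prod, hF, zero_mul]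
    have h1 : ∀ᵐ z ∂(F.prod F), (0:ℝ) ≤ z.1 := by
      rw [ae_iff]
      convert hz using 2
      ext z
      simp [not_le]
    filter_upwards [h1] with z hz1
    exact le_trans hz1 (le_max_left _ _)
  have hmax_int : Integrable (fun z : ℝ × ℝ => max z.1 z.2) (F.prod F) := by
    have h1 : Integrable (fun z : ℝ × ℝ => |z.1|) (F.prod F) := by
      have h := hFi.abs.mul_prod (integrable_const (1:ℝ)) (ν := F)
      simpa using h
    have h2 : Integrable (fun z : ℝ × ℝ => |z.2|) (F.prod F) := by
      have h := (integrable_const (1:ℝ)).mul_prod hFi.abs (μ := F)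
      simpa using h
    refine (h1.add h2).mono' hmax_meas.aestronglyMeasurable
      (Filter.Eventually.of_forall fun z => ?_)
    rw [Real.norm_eq_abs]
    refine abs_max_le_max_abs_abs.trans (max_le ?_ ?_)
    · exact le_add_of_nonneg_right (abs_nonneg _)
    · exact le_add_of_nonneg_left (abs_nonneg _)
  have hOPT : optWelfare F F = ∫ t in Set.Ioi 0, (1 - Φ t * Φ t) := by
    unfold optWelfare
    rw [hmax_int.integral_eq_integral_meas_lt hmax_nn]
    refine setIntegral_congr_fun measurableSet_Ioi fun t _ => ?_
    have hset : {z : ℝ × ℝ | t < max z.1 z.2} = (Set.Iic t ×ˢ Set.Iic t)ᶜ := by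
      ext z
      simp only [Set.mem_setOf_eq, Set.mem_compl_iff, Set.mem_prod, Set.mem_Iic,
        not_and_or, not_le, lt_max_iff]
    rw [hset, measureReal_def, measure_compl (measurableSet_Iic.prod measurableSet_Iic) (measure_ne_top _ _),
      Measure.prod_prod, measure_univ]
    rw [ENNReal.toReal_sub_of_le (by
        calc F (Set.Iic t) * F (Set.Iic t) ≤ 1 * 1 :=
              mul_le_mul' prob_le_one prob_le_one
          _ = 1 := one_mul 1) ENNReal.one_ne_top]
    rw [ENNReal.toReal_mul, ENNReal.toReal_one]
  -- welfare decomposition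
  have hIci : (F (Set.Ici p)).toReal = 1 - q := by
    have h1 := measure_compl (measurableSet_Iio (a := p)) (measure_ne_top F _)
    rw [Set.compl_Iio, measure_univ] at h1
    rw [h1, aux_Iio_eq_Iic hatomless,
      ENNReal.toReal_sub_of_le prob_le_one ENNReal.one_ne_top, ENNReal.toReal_one, hPq]
  have hind1_int : Integrable ((Set.Ici p).indicator (fun _ => (1:ℝ))) F :=
    (integrable_const (1:ℝ)).indicator measurableSet_Ici
  have hind2_int : Integrable ((Set.Iic p).indicator (fun _ => (1:ℝ))) F :=
    (integrable_const (1:ℝ)).indicator measurableSet_Iic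
  have hind1_val : ∫ y, (Set.Ici p).indicator (fun _ => (1:ℝ)) y ∂F = 1 - q := by
    rw [integral_indicator measurableSet_Ici, setIntegral_const, measureReal_def, hIci, smul_eq_mul, mul_one]
  have hind2_val : ∫ y, (Set.Iic p).indicator (fun _ => (1:ℝ)) y ∂F = q := by
    rw [integral_indicator measurableSet_Iic, setIntegral_const, measureReal_def, hPq, smul_eq_mul, mul_one]
  have hwelf : welfare F F p
      = (∫ x, id x ∂F) + ((∫ x, fa x ∂F) * (1 - q) + q * (∫ x, fb x ∂F)) := by
    unfold welfare
    have hint_eq : (fun z : ℝ × ℝ => z.1 + if z.1 ≤ p ∧ p ≤ z.2 then z.2 - z.1 else 0)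
        = fun z : ℝ × ℝ => (fun x => id x) z.1 * (fun _ : ℝ => (1:ℝ)) z.2
          + ((fun x => fa x) z.1 * (fun y => (Set.Ici p).indicator (fun _ => (1:ℝ)) y) z.2
            + (fun x => (Set.Iic p).indicator (fun _ => (1:ℝ)) x) z.1
              * (fun y => fb y) z.2) := by
      funext z
      simp only [hfadef, hfbdef, Set.indicator_apply, Set.mem_Ici, Set.mem_Iic, id_eq]
      rcases le_or_gt z.1 p with h1 | h1
      · rcases le_or_gt p z.2 with h2 | h2
        · rw [if_pos ⟨h1, h2⟩, if_pos h1, if_pos h2, max_eq_left (sub_nonneg.2 h1),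
            max_eq_left (sub_nonneg.2 h2)]
          ring
        · rw [if_neg (fun h => absurd h.2 (not_le.2 h2)), if_pos h1, if_neg (not_le.2 h2),
            max_eq_right (by linarith : z.2 - p ≤ 0)]
          ring
      · rw [if_neg (fun h => absurd h.1 (not_le.2 h1)), if_neg (not_le.2 h1),
          max_eq_right (by linarith : p - z.1 ≤ 0)]
        ring
    rw [hint_eq]
    have hfst_int : Integrable (fun z : ℝ × ℝ => (fun x => id x) z.1 * (fun _ : ℝ => (1:ℝ)) z.2)
        (F.prod F) := hFi.mul_prod (integrable_const 1)
    have hprod1 : Integrable (fun z : ℝ × ℝ =>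
        (fun x => fa x) z.1 * (fun y => (Set.Ici p).indicator (fun _ => (1:ℝ)) y) z.2)
        (F.prod F) := hfa_int.mul_prod hind1_int
    have hprod2 : Integrable (fun z : ℝ × ℝ =>
        (fun x => (Set.Iic p).indicator (fun _ => (1:ℝ)) x) z.1 * (fun y => fb y) z.2)
        (F.prod F) := hind2_int.mul_prod hfb_int
    have hprod12 : Integrable (fun z : ℝ × ℝ =>
        (fun x => fa x) z.1 * (fun y => (Set.Ici p).indicator (fun _ => (1:ℝ)) y) z.2
          + (fun x => (Set.Iic p).indicator (fun _ => (1:ℝ)) x) z.1 * (fun y => fb y) z.2)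
        (F.prod F) := hprod1.add hprod2
    rw [integral_add hfst_int hprod12, integral_add hprod1 hprod2]
    simp only [integral_prod_mul]
    have hfst_val : (∫ z : ℝ × ℝ, id z.1 * 1 ∂(F.prod F)) = ∫ x, id x ∂F := by
      rw [integral_prod_mul (f := fun x : ℝ => id x) (g := fun _ : ℝ => (1:ℝ))]
      simp
    rw [hfst_val, hind1_val, hind2_val]
  -- integrability on (0, ∞)
  have hg_ennmeas : Measurable (fun t : ℝ => F (Set.Ioi t)) := by
    refine Antitone.measurable fun a b hab => ?_
    exact measure_mono (Set.Ioi_subset_Ioi hab)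
  have I1 : IntegrableOn g (Set.Ioi (0:ℝ)) volume := by
    refine integrable_toReal_of_lintegral_ne_top hg_ennmeas.aemeasurable ?_
    have hkey := lintegral_eq_lintegral_meas_lt F hid_nn hFi.aemeasurable
    have hlt := hFi.lintegral_lt_top
    rw [hkey] at hlt
    exact ne_of_lt hlt
  have Ia_int : IntegrableOn ((Set.Iio p).indicator Φ) (Set.Ioi (0:ℝ)) volume := by
    have hbound : Integrable ((Set.Ioc (0:ℝ) p).indicator (fun _ => (1:ℝ)))
        (volume.restrict (Set.Ioi (0:ℝ))) := by
      refine Integrable.integrableOn ?_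
      rw [integrable_indicator_iff measurableSet_Ioc]
      exact integrableOn_const measure_Ioc_lt_top.ne
    refine hbound.mono' ((hΦ_meas.indicator measurableSet_Iio).aestronglyMeasurable) ?_
    filter_upwards [ae_restrict_mem measurableSet_Ioi] with t ht
    by_cases hmem : t ∈ Set.Iio p
    · rw [Set.indicator_of_mem hmem, Real.norm_of_nonneg (hΦ0 t),
        Set.indicator_of_mem (Set.mem_Ioc.2 ⟨ht, le_of_lt hmem⟩)]
      exact hΦ1 t
    · rw [Set.indicator_of_notMem hmem]
      simp only [norm_zero]
      exact Set.indicator_nonneg (fun _ _ => zero_le_one) _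
  have Ib_int : IntegrableOn ((Set.Ioi p).indicator g) (Set.Ioi (0:ℝ)) volume := by
    refine I1.mono' ((hg_meas.indicator measurableSet_Ioi).aestronglyMeasurable) ?_
    filter_upwards with t
    by_cases hmem : t ∈ Set.Ioi p
    · rw [Set.indicator_of_mem hmem, Real.norm_of_nonneg (hg_nn t)]
    · rw [Set.indicator_of_notMem hmem]
      simpa using hg_nn t
  have Iopt_int : IntegrableOn (fun t => 1 - Φ t * Φ t) (Set.Ioi (0:ℝ)) volume := by
    refine (I1.const_mul 2).mono'
      (((measurable_const.sub (hΦ_meas.mul hΦ_meas))).aestronglyMeasurable) ?_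
    filter_upwards with t
    have h0 := hΦ0 t
    have h1 := hΦ1 t
    rw [Real.norm_of_nonneg (by nlinarith [h0, h1]), hg_eq t]
    nlinarith [sq_nonneg (1 - Φ t)]
  -- final comparison
  have hwelf' : welfare F F p = ∫ t in Set.Ioi 0,
      (g t + ((1 - q) * ((Set.Iio p).indicator Φ t) + q * ((Set.Ioi p).indicator g t))) := by
    rw [hwelf, hES, ha, hb]
    have hIb2 : Integrable (fun t =>
        (1 - q) * ((Set.Iio p).indicator Φ t) + q * ((Set.Ioi p).indicator g t))
        (volume.restrict (Set.Ioi 0)) :=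
      (Ia_int.const_mul (1 - q)).add (Ib_int.const_mul q)
    rw [integral_add I1 hIb2,
      integral_add (Ia_int.const_mul (1 - q)) (Ib_int.const_mul q),
      integral_const_mul, integral_const_mul]
    ring
  have hp_ne : ∀ᵐ t ∂(volume.restrict (Set.Ioi (0:ℝ))), t ≠ p := by
    rw [ae_iff]
    have hset : {t : ℝ | ¬ t ≠ p} = {p} := by ext t; simp
    rw [hset]
    exact le_antisymm ((Measure.restrict_apply_le _ _).trans_eq Real.volume_singleton)
      zero_le
  have hae : ∀ᵐ t ∂(volume.restrict (Set.Ioi (0:ℝ))),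
      c * (1 - Φ t * Φ t)
        ≤ g t + ((1 - q) * ((Set.Iio p).indicator Φ t) + q * ((Set.Ioi p).indicator g t)) := by
    filter_upwards [hp_ne] with t htp
    have hx0 := hΦ0 t
    have hx1 := hΦ1 t
    rcases lt_or_gt_of_ne htp with hlt | hgt
    · rw [Set.indicator_of_mem (Set.mem_Iio.2 hlt),
        Set.indicator_of_notMem (by simp only [Set.mem_Ioi, not_lt]; linarith), hg_eq t,
        hcdef, hqdef]
      nlinarith [sq_nonneg (Φ t - (s2 - 1))]
    · rw [Set.indicator_of_notMem (by simp only [Set.mem_Iio, not_lt]; linarith),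
        Set.indicator_of_mem (Set.mem_Ioi.2 hgt), hg_eq t, hcdef, hqdef]
      nlinarith [sq_nonneg (1 - Φ t), mul_nonneg (sub_nonneg.2 hx1) (sub_nonneg.2 hx1)]
  calc c * optWelfare F F = ∫ t in Set.Ioi 0, c * (1 - Φ t * Φ t) := by
        rw [hOPT, ← integral_const_mul]
    _ ≤ ∫ t in Set.Ioi 0,
        (g t + ((1 - q) * ((Set.Iio p).indicator Φ t) + q * ((Set.Ioi p).indicator g t))) :=
      integral_mono_ae (Iopt_int.const_mul c)
        (I1.add ((Ia_int.const_mul (1 - q)).add (Ib_int.const_mul q))) hae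
    _ = welfare F F p := hwelf'.symm
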